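/- Let n, t ∈ ℕ with 8 ≤ t < n and t divisible by 8, let V_I be a nonempty proposal set and V_O a decision set, and let val be a validity property such that the val-agreement problem is non-trivial (⋂_{c ∈ I} val(c) = ∅). Then every deterministic algorithm that solves the val-agreement problem in the omission model has message complexity at least t²/32. -/

import Mathlib

/-- A message: a sender, a (distinct) receiver and a round number. -/
structure Message (n : ℕ) where
  sender : Fin n
  receiver : Fin n
  round : ℕ
  ne : sender ≠ receiver

/-- A valid set of messages received by a process in state `s`:
every message has the right receiver and round, and there is
at most one message per sender. -/
def ValidRecv {n : ℕ} {St : Type} (proc : St → Fin n) (rnd : St → ℕ)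
    (s : St) (M : Set (Message n)) : Prop :=
  (∀ m ∈ M, m.receiver = proc s ∧ m.round = rnd s) ∧
  (∀ m ∈ M, ∀ m' ∈ M, m.sender = m'.sender → m = m')

/-- A deterministic algorithm in the synchronous (omission) model:
a type of local states recording a process, a round, a proposal and a
decision, initial states and initial messages for every proposal, and a
deterministic transition function. -/
structure Algorithm (n : ℕ) (Vi Vo : Type) where
  St : Type
  proc : St → Fin n
  rnd : St → ℕ
  prop : St → Vi
  dec : St → Option Vo
  init : Fin n → Vi → St
  initMsgs : Fin n → Vi → Set (Message n)
  trans : St → Set (Message n) → St × Set (Message n)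
  init_proc : ∀ i v, proc (init i v) = i
  init_rnd : ∀ i v, rnd (init i v) = 1
  init_prop : ∀ i v, prop (init i v) = v
  init_dec : ∀ i v, dec (init i v) = none
  initMsgs_sender : ∀ i v, ∀ m ∈ initMsgs i v, m.sender = i
  initMsgs_round : ∀ i v, ∀ m ∈ initMsgs i v, m.round = 1
  initMsgs_uniq : ∀ i v, ∀ m ∈ initMsgs i v, ∀ m' ∈ initMsgs i v,
    m.receiver = m'.receiver → m = m'
  trans_ok : ∀ s M, ValidRecv proc rnd s M →
    proc (trans s M).1 = proc s ∧
    rnd (trans s M).1 = rnd s + 1 ∧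
    prop (trans s M).1 = prop s ∧
    (dec s ≠ none → dec (trans s M).1 = dec s) ∧
    (∀ m ∈ (trans s M).2, m.sender = proc s ∧ m.round = rnd s + 1) ∧
    (∀ m ∈ (trans s M).2, ∀ m' ∈ (trans s M).2, m.receiver = m'.receiver → m = m')

/-- The data of an execution of algorithm `A`: the set of faulty
processes and, for every process and round, a state and the four sets of
sent, send-omitted, received and receive-omitted messages. -/
structure Exec {n : ℕ} {Vi Vo : Type} (A : Algorithm n Vi Vo) where
  faulty : Set (Fin n)
  st : Fin n → ℕ → A.St
  sent : Fin n → ℕ → Set (Message n)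
  sendOmit : Fin n → ℕ → Set (Message n)
  recvd : Fin n → ℕ → Set (Message n)
  recvOmit : Fin n → ℕ → Set (Message n)

/-- `j` is one of the rounds `1, …, k` (where `k ∈ ℕ ∪ {∞}`). -/
def InHorizon (k : ℕ∞) (j : ℕ) : Prop := 1 ≤ j ∧ (j : ℕ∞) ≤ k

/-- `E` is a `k`-round execution of `A` with at most `t` faulty processes. -/
def IsExec {n : ℕ} {Vi Vo : Type} (t : ℕ) (A : Algorithm n Vi Vo) (k : ℕ∞)
    (E : Exec A) : Prop :=
  -- at most `t` faulty processes
  E.faulty.encard ≤ (t : ℕ∞) ∧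
  -- every process starts in one of its initial states, with
  -- sent ∪ send-omitted equal to its prescribed initial send set
  ((1 : ℕ∞) ≤ k → ∀ i, ∃ v, E.st i 1 = A.init i v ∧
      E.sent i 1 ∪ E.sendOmit i 1 = A.initMsgs i v) ∧
  -- later states and sent ∪ send-omitted sets are obtained by the transition function
  (∀ i j, 1 ≤ j → ((j + 1 : ℕ) : ℕ∞) ≤ k →
      A.trans (E.st i j) (E.recvd i j)
        = (E.st i (j + 1), E.sent i (j + 1) ∪ E.sendOmit i (j + 1))) ∧
  -- per-round well-formedness (fragments)
  (∀ i j, InHorizon k j →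
      A.proc (E.st i j) = i ∧ A.rnd (E.st i j) = j ∧
      (∀ m ∈ E.sent i j ∪ E.sendOmit i j, m.sender = i ∧ m.round = j) ∧
      (∀ m ∈ E.recvd i j ∪ E.recvOmit i j, m.receiver = i ∧ m.round = j) ∧
      E.sent i j ∩ E.sendOmit i j = ∅ ∧
      E.recvd i j ∩ E.recvOmit i j = ∅ ∧
      (∀ m ∈ E.sent i j ∪ E.sendOmit i j, ∀ m' ∈ E.sent i j ∪ E.sendOmit i j,
        m.receiver = m'.receiver → m = m') ∧
      (∀ m ∈ E.recvd i j ∪ E.recvOmit i j, ∀ m' ∈ E.recvd i j ∪ E.recvOmit i j,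
        m.sender = m'.sender → m = m')) ∧
  -- send-validity
  (∀ i j, InHorizon k j → ∀ m ∈ E.sent i j,
      m ∈ E.recvd m.receiver j ∪ E.recvOmit m.receiver j) ∧
  -- receive-validity
  (∀ i j, InHorizon k j → ∀ m ∈ E.recvd i j ∪ E.recvOmit i j, m ∈ E.sent m.sender j) ∧
  -- omission-validity
  (∀ i, (∃ j, InHorizon k j ∧ (E.sendOmit i j ≠ ∅ ∨ E.recvOmit i j ≠ ∅)) → i ∈ E.faulty)

/-- Process `i` proposes `v` in `E`. -/
def Proposes {n : ℕ} {Vi Vo : Type} {A : Algorithm n Vi Vo}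
    (E : Exec A) (i : Fin n) (v : Vi) : Prop :=
  A.prop (E.st i 1) = v

/-- Process `i` decides `v` in the `k`-round execution `E`. -/
def Decides {n : ℕ} {Vi Vo : Type} {A : Algorithm n Vi Vo}
    (k : ℕ∞) (E : Exec A) (i : Fin n) (v : Vo) : Prop :=
  ∃ j, InHorizon k j ∧ A.dec (E.st i j) = some v

/-- The number of messages sent (not send-omitted) by correct processes in `E`. -/
noncomputable def msgCount {n : ℕ} {Vi Vo : Type} {A : Algorithm n Vi Vo}
    (E : Exec A) : ℕ∞ :=
  {m : Message n | ∃ i, i ∉ E.faulty ∧ ∃ j, 1 ≤ j ∧ m ∈ E.sent i j}.encard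

/-- The message complexity of `A`: the supremum, over all infinite
executions of `A` (with at most `t` faulty processes), of the number of
messages sent by correct processes. -/
noncomputable def MsgComplexity {n : ℕ} {Vi Vo : Type} (t : ℕ)
    (A : Algorithm n Vi Vo) : ℕ∞ :=
  ⨆ E : {E : Exec A // IsExec t A ⊤ E}, msgCount E.1

/-- Two `k`-round executions are indistinguishable to process `i`: it has the
same proposal and receives exactly the same messages in every round of both. -/
def Indist {n : ℕ} {Vi Vo : Type} {A : Algorithm n Vi Vo}
    (k : ℕ∞) (E E' : Exec A) (i : Fin n) : Prop :=
  A.prop (E.st i 1) = A.prop (E'.st i 1) ∧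
  ∀ j, InHorizon k j → E.recvd i j = E'.recvd i j

/-- Group `G ⊊ Π` of at most `t` processes is isolated from round `k` in the
infinite execution `E`: every process of `G` is faulty, send-omits no message,
and receive-omits exactly those messages sent to it in rounds `≥ k` by
processes outside `G`. -/
def IsolatedFrom {n : ℕ} {Vi Vo : Type} {A : Algorithm n Vi Vo}
    (t : ℕ) (E : Exec A) (G : Set (Fin n)) (k : ℕ) : Prop :=
  G ≠ Set.univ ∧ G.encard ≤ (t : ℕ∞) ∧
  ∀ g ∈ G, g ∈ E.faulty ∧
    (∀ j, 1 ≤ j → E.sendOmit g j = ∅) ∧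
    (∀ j, 1 ≤ j → E.recvOmit g j
      = {m | m.receiver = g ∧ m.sender ∉ G ∧ k ≤ j ∧ m ∈ E.sent m.sender j})

/-- An input configuration: an assignment of proposals to at least `n - t`
processes (`none` marks processes outside the domain `π(c)`). -/
def IsInputConf (n t : ℕ) {Vi : Type} (c : Fin n → Option Vi) : Prop :=
  n - t ≤ {i | c i ≠ none}.ncard

/-- The containment relation `c ⊒ c'` between input configurations. -/
def Contains {n : ℕ} {Vi : Type} (c c' : Fin n → Option Vi) : Prop :=
  ∀ i, c' i ≠ none → c i = c' i

/-- The execution `E` corresponds to the input configuration `c`: the correct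
processes of `E` are exactly those in `π(c)`, and each of them proposes its
value prescribed by `c`. -/
def CorrespondsTo {n : ℕ} {Vi Vo : Type} {A : Algorithm n Vi Vo}
    (E : Exec A) (c : Fin n → Option Vi) : Prop :=
  ∀ i, (i ∉ E.faulty → c i = some (A.prop (E.st i 1))) ∧ (i ∈ E.faulty → c i = none)

/-- `A` solves the `val`-agreement problem in the omission model, tolerating
`t` omission-faulty processes: every infinite execution satisfies Termination,
Agreement, and decided values are admissible for the corresponding input
configuration. -/
def SolvesVal {n : ℕ} {Vi Vo : Type} (t : ℕ) (A : Algorithm n Vi Vo)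
    (val : (Fin n → Option Vi) → Set Vo) : Prop :=
  ∀ E : Exec A, IsExec t A ⊤ E →
    -- Termination
    (∀ i, i ∉ E.faulty → ∃ v, Decides ⊤ E i v) ∧
    -- Agreement
    (∀ i i' v v', i ∉ E.faulty → i' ∉ E.faulty →
      Decides ⊤ E i v → Decides ⊤ E i' v' → v = v') ∧
    -- Validity
    (∀ c, CorrespondsTo E c → ∀ i, i ∉ E.faulty → ∀ v, Decides ⊤ E i v → v ∈ val c)

/- ===================== Auxiliary development ===================== -/

namespace LBproof

variable {n : ℕ} {Vi Vo : Type}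

/-- The synchronous run of algorithm `A` on inputs `w`, where a message is
delivered iff `¬ drop m`.  Index `j` holds the data (state, prescribed
outgoing messages) of round `j+1`. -/
def run (A : Algorithm n Vi Vo) (w : Fin n → Vi) (drop : Message n → Prop) :
    ℕ → Fin n → A.St × Set (Message n)
  | 0 => fun i => (A.init i (w i), A.initMsgs i (w i))
  | (j+1) => fun i =>
      A.trans (run A w drop j i).1
        {m : Message n | m ∈ (run A w drop j m.sender).2 ∧ m.receiver = i ∧ ¬ drop m}

/-- Messages delivered to `i` in round `j+1`. -/
def rcv (A : Algorithm n Vi Vo) (w : Fin n → Vi) (drop : Message n → Prop)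
    (j : ℕ) (i : Fin n) : Set (Message n) :=
  {m : Message n | m ∈ (run A w drop j m.sender).2 ∧ m.receiver = i ∧ ¬ drop m}

theorem run_succ (A : Algorithm n Vi Vo) (w : Fin n → Vi) (drop : Message n → Prop)
    (j : ℕ) (i : Fin n) :
    run A w drop (j+1) i = A.trans (run A w drop j i).1 (rcv A w drop j i) := rfl

theorem run_inv (A : Algorithm n Vi Vo) (w : Fin n → Vi) (drop : Message n → Prop) :
    ∀ j i,
    A.proc (run A w drop j i).1 = i ∧
    A.rnd (run A w drop j i).1 = j + 1 ∧
    A.prop (run A w drop j i).1 = w i ∧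
    (∀ m ∈ (run A w drop j i).2, m.sender = i ∧ m.round = j + 1) ∧
    (∀ m ∈ (run A w drop j i).2, ∀ m' ∈ (run A w drop j i).2,
      m.receiver = m'.receiver → m = m') := by
  intro j
  induction j with
  | zero =>
      intro i
      exact ⟨A.init_proc i (w i), A.init_rnd i (w i), A.init_prop i (w i),
        fun m hm => ⟨A.initMsgs_sender i (w i) m hm, A.initMsgs_round i (w i) m hm⟩,
        A.initMsgs_uniq i (w i)⟩
  | succ j ih =>
      intro i
      have hval : ValidRecv A.proc A.rnd (run A w drop j i).1 (rcv A w drop j i) := by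
        constructor
        · rintro m ⟨hm1, hm2, -⟩
          refine ⟨?_, ?_⟩
          · rw [hm2, (ih i).1]
          · rw [((ih m.sender).2.2.2.1 m hm1).2, (ih i).2.1]
        · rintro m ⟨hm1, hm2, -⟩ m' ⟨hm'1, hm'2, -⟩ hs
          exact (ih m.sender).2.2.2.2 m hm1 m' (by rw [hs]; exact hm'1)
            (by rw [hm2, hm'2])
      have ht := A.trans_ok _ _ hval
      rw [run_succ]
      refine ⟨?_, ?_, ?_, ?_, ?_⟩
      · rw [ht.1, (ih i).1]
      · rw [ht.2.1, (ih i).2.1]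
      · rw [ht.2.2.1, (ih i).2.2.1]
      · intro m hm
        have := ht.2.2.2.2.1 m hm
        exact ⟨by rw [this.1, (ih i).1], by rw [this.2, (ih i).2.1]⟩
      · exact ht.2.2.2.2.2

/-- The execution built from a run: `drop` determines the dynamics (which
messages are not delivered), and among the dropped messages, those satisfying
`sdrop` are attributed to the sender (send-omission), the rest to the receiver
(receive-omission). -/
def bexec (A : Algorithm n Vi Vo) (w : Fin n → Vi) (drop sdrop : Message n → Prop)
    (flt : Set (Fin n)) : Exec A where
  faulty := flt
  st := fun i j => (run A w drop (j-1) i).1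
  sent := fun i j => {m | m ∈ (run A w drop (j-1) i).2 ∧ ¬ sdrop m}
  sendOmit := fun i j => {m | m ∈ (run A w drop (j-1) i).2 ∧ sdrop m}
  recvd := fun i j => {m | m ∈ (run A w drop (j-1) m.sender).2 ∧ m.receiver = i ∧ ¬ drop m}
  recvOmit := fun i j =>
    {m | m ∈ (run A w drop (j-1) m.sender).2 ∧ m.receiver = i ∧ drop m ∧ ¬ sdrop m}

theorem bexec_isExec (t : ℕ) (A : Algorithm n Vi Vo) (w : Fin n → Vi)
    (drop sdrop : Message n → Prop) (flt : Set (Fin n))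
    (H0 : ∀ m, sdrop m → drop m)
    (H1 : ∀ j (m : Message n), m ∈ (run A w drop j m.sender).2 → sdrop m → m.sender ∈ flt)
    (H2 : ∀ j (m : Message n), m ∈ (run A w drop j m.sender).2 → drop m → ¬ sdrop m →
      m.receiver ∈ flt)
    (H3 : flt.encard ≤ (t : ℕ∞)) :
    IsExec t A ⊤ (bexec A w drop sdrop flt) := by
  set E := bexec A w drop sdrop flt with hE
  refine ⟨H3, ?_, ?_, ?_, ?_, ?_, ?_⟩
  · -- initial states
    intro _ i
    refine ⟨w i, rfl, ?_⟩
    ext m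
    simp only [hE, bexec, Set.mem_union, Set.mem_setOf_eq]
    show (m ∈ (run A w drop 0 i).2 ∧ ¬ sdrop m) ∨ (m ∈ (run A w drop 0 i).2 ∧ sdrop m) ↔ _
    show _ ↔ m ∈ A.initMsgs i (w i)
    have : (run A w drop 0 i).2 = A.initMsgs i (w i) := rfl
    rw [this]; tauto
  · -- transitions
    intro i j hj _
    have hj' : j - 1 + 1 = j := by omega
    have key : A.trans ((run A w drop (j-1) i).1) (rcv A w drop (j-1) i)
        = run A w drop j i := by
      rw [← run_succ, hj']
    have hrecvd : E.recvd i j = rcv A w drop (j-1) i := rfl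
    have hst : E.st i j = (run A w drop (j-1) i).1 := rfl
    rw [hst, hrecvd, key]
    have h1 : E.st i (j+1) = (run A w drop j i).1 := by
      show (run A w drop (j+1-1) i).1 = _
      norm_num
    have h2 : E.sent i (j+1) ∪ E.sendOmit i (j+1) = (run A w drop j i).2 := by
      ext m
      show (m ∈ (run A w drop (j+1-1) i).2 ∧ ¬ sdrop m)
          ∨ (m ∈ (run A w drop (j+1-1) i).2 ∧ sdrop m) ↔ _
      norm_num
      tauto
    rw [h1, h2]
  · -- well-formedness
    intro i j hj
    have hj1 : 1 ≤ j := hj.1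
    have hj' : j - 1 + 1 = j := by omega
    have inv := run_inv A w drop (j-1)
    have hout : ∀ m, m ∈ (run A w drop (j-1) i).2 → m.sender = i ∧ m.round = j := by
      intro m hm
      have := (inv i).2.2.2.1 m hm
      exact ⟨this.1, by rw [this.2, hj']⟩
    have houts : ∀ m, m ∈ (run A w drop (j-1) m.sender).2 → m.round = j := by
      intro m hm
      have := (inv m.sender).2.2.2.1 m hm
      rw [this.2, hj']
    refine ⟨(inv i).1, by rw [show A.rnd (E.st i j) = (j-1) + 1 from (inv i).2.1, hj'],
      ?_, ?_, ?_, ?_, ?_, ?_⟩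
    · rintro m (⟨hm, -⟩ | ⟨hm, -⟩) <;> exact hout m hm
    · rintro m (⟨hm, h2, -⟩ | ⟨hm, h2, -⟩) <;> exact ⟨h2, houts m hm⟩
    · ext m
      constructor
      · rintro ⟨⟨-, h1⟩, ⟨-, h2⟩⟩; exact absurd h2 h1
      · intro h; exact absurd h (Set.notMem_empty m)
    · ext m
      constructor
      · rintro ⟨⟨-, -, h1⟩, ⟨-, -, h2, -⟩⟩
        exact absurd h2 h1
      · intro h; exact absurd h (Set.notMem_empty m)
    · rintro m (⟨hm, -⟩ | ⟨hm, -⟩) m' (⟨hm', -⟩ | ⟨hm', -⟩) hrec <;>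
        exact (inv i).2.2.2.2 m hm m' hm' hrec
    · rintro m (⟨hm, hr, -⟩ | ⟨hm, hr, -⟩) m' (⟨hm', hr', -⟩ | ⟨hm', hr', -⟩) hs <;>
      · refine (inv m.sender).2.2.2.2 m hm m' ?_ (by rw [hr, hr'])
        rw [hs]; exact hm'
  · -- send-validity
    intro i j hj m hm
    obtain ⟨hm1, hns⟩ := hm
    have hsend : m.sender = i := ((run_inv A w drop (j-1) i).2.2.2.1 m hm1).1
    have hm1' : m ∈ (run A w drop (j-1) m.sender).2 := by rw [hsend]; exact hm1
    by_cases hd : drop m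
    · exact Or.inr ⟨hm1', rfl, hd, hns⟩
    · exact Or.inl ⟨hm1', rfl, hd⟩
  · -- receive-validity
    intro i j hj m hm
    rcases hm with ⟨hm1, -, hnd⟩ | ⟨hm1, -, -, hns⟩
    · exact ⟨hm1, fun hs => hnd (H0 m hs)⟩
    · exact ⟨hm1, hns⟩
  · -- omission-validity
    rintro i ⟨j, hj, h | h⟩
    · obtain ⟨m, hm1, hm2⟩ := Set.nonempty_iff_ne_empty.mpr h
      have hsend : m.sender = i := ((run_inv A w drop (j-1) i).2.2.2.1 m hm1).1
      have : m.sender ∈ flt := H1 (j-1) m (by rw [hsend]; exact hm1) hm2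
      rw [hsend] at this
      exact this
    · obtain ⟨m, hm1, hrec, hd, hns⟩ := Set.nonempty_iff_ne_empty.mpr h
      have : m.receiver ∈ flt := H2 (j-1) m hm1 hd hns
      rw [hrec] at this
      exact this

end LBproof
namespace LBproof

variable {n : ℕ} {Vi Vo : Type}

theorem run_congr (A : Algorithm n Vi Vo) (w : Fin n → Vi) {drop drop' : Message n → Prop}
    (h : ∀ j (m : Message n), m ∈ (run A w drop j m.sender).2 → (drop m ↔ drop' m)) :
    ∀ j, run A w drop j = run A w drop' j := by
  intro j
  induction j with
  | zero => rfl
  | succ j ih =>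
      funext i
      show A.trans (run A w drop j i).1
            {m : Message n | m ∈ (run A w drop j m.sender).2 ∧ m.receiver = i ∧ ¬ drop m}
         = A.trans (run A w drop' j i).1
            {m : Message n | m ∈ (run A w drop' j m.sender).2 ∧ m.receiver = i ∧ ¬ drop' m}
      rw [← ih]
      congr 1
      ext m
      simp only [Set.mem_setOf_eq]
      have := h j m
      tauto

theorem run_prefix (A : Algorithm n Vi Vo) (w : Fin n → Vi) {drop : Message n → Prop}
    (K : ℕ) (h : ∀ m, drop m → K ≤ m.round) :
    ∀ j, j < K → run A w drop j = run A w (fun _ => False) j := by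
  intro j
  induction j with
  | zero => intro _; rfl
  | succ j ih =>
      intro hjK
      have hj : j < K := by omega
      funext i
      show A.trans (run A w drop j i).1
            {m : Message n | m ∈ (run A w drop j m.sender).2 ∧ m.receiver = i ∧ ¬ drop m}
         = A.trans (run A w (fun _ => False) j i).1
            {m : Message n | m ∈ (run A w (fun _ => False) j m.sender).2 ∧ m.receiver = i ∧ ¬ False}
      rw [ih hj]
      congr 1
      ext m
      simp only [Set.mem_setOf_eq]
      constructor
      · rintro ⟨h1, h2, -⟩; exact ⟨h1, h2, not_false⟩
      · rintro ⟨h1, h2, -⟩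
        refine ⟨h1, h2, fun hd => ?_⟩
        have hr := ((run_inv A w (fun _ => False) j m.sender).2.2.2.1 m h1).2
        have := h m hd
        omega

theorem states_eq {t : ℕ} {A : Algorithm n Vi Vo} {E E' : Exec A}
    (hE : IsExec t A ⊤ E) (hE' : IsExec t A ⊤ E') (i : Fin n)
    (hprop : A.prop (E.st i 1) = A.prop (E'.st i 1))
    (hrecvd : ∀ j, 1 ≤ j → E.recvd i j = E'.recvd i j) :
    ∀ j, 1 ≤ j → E.st i j = E'.st i j := by
  have h1 : E.st i 1 = E'.st i 1 := by
    obtain ⟨v, hv, -⟩ := hE.2.1 le_top i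
    obtain ⟨v', hv', -⟩ := hE'.2.1 le_top i
    rw [hv, hv'] at hprop ⊢
    rw [A.init_prop, A.init_prop] at hprop
    rw [hprop]
  intro j
  induction j with
  | zero => omega
  | succ j ih =>
      intro _
      rcases Nat.eq_zero_or_pos j with hj0 | hj1
      · subst hj0; exact h1
      · have e1 := hE.2.2.1 i j hj1 le_top
        have e2 := hE'.2.2.1 i j hj1 le_top
        have f1 : E.st i (j+1) = (A.trans (E.st i j) (E.recvd i j)).1 := by rw [e1]
        have f2 : E'.st i (j+1) = (A.trans (E'.st i j) (E'.recvd i j)).1 := by rw [e2]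
        rw [f1, f2, ih hj1, hrecvd j hj1]

theorem decides_of_states {A : Algorithm n Vi Vo} {E E' : Exec A} {i : Fin n}
    (hst : ∀ j, 1 ≤ j → E.st i j = E'.st i j) {v : Vo}
    (h : Decides ⊤ E i v) : Decides ⊤ E' i v := by
  obtain ⟨j, hj, hd⟩ := h
  exact ⟨j, hj, by rw [← hst j hj.1]; exact hd⟩

end LBproof
namespace LBproof

/-- All the data of the main argument: an algorithm solving `val`-agreement
with small message complexity, with `t = 8z`, `t < n`. -/
structure Ctx (n : ℕ) (Vi Vo : Type) where
  A : Algorithm n Vi Vo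
  t : ℕ
  z : ℕ
  val : (Fin n → Option Vi) → Set Vo
  ht : t = 8 * z
  hz : 1 ≤ z
  htn : t < n
  hA : SolvesVal t A val
  hsmall : ∀ E : Exec A, IsExec t A ⊤ E → msgCount E < ((2 * z ^ 2 : ℕ) : ℕ∞)

namespace Ctx

variable {n : ℕ} {Vi Vo : Type} (C : Ctx n Vi Vo)

theorem h4zn : 4 * C.z ≤ n := by
  have h1 := C.htn; have h2 := C.ht; omega

theorem h4zn' : 4 * C.z < n := by
  have h1 := C.htn; have h2 := C.ht; omega

/-- The distinguished "deaf group": the first `4z` processes. -/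
def Cset : Finset (Fin n) := Finset.image (Fin.castLE C.h4zn) Finset.univ

theorem mem_Cset (i : Fin n) : i ∈ C.Cset ↔ (i : ℕ) < 4 * C.z := by
  constructor
  · intro hi
    simp only [Cset, Finset.mem_image] at hi
    obtain ⟨j, -, rfl⟩ := hi
    exact j.isLt
  · intro hi
    simp only [Cset, Finset.mem_image]
    exact ⟨⟨(i : ℕ), hi⟩, Finset.mem_univ _, by ext; simp [Fin.castLE]⟩

theorem card_Cset : C.Cset.card = 4 * C.z := by
  rw [Cset, Finset.card_image_of_injective _ (Fin.castLE_injective _), Finset.card_univ,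
    Fintype.card_fin]

/-- A fixed observer outside the deaf group. -/
def q0 : Fin n := ⟨4 * C.z, C.h4zn'⟩

theorem q0_not_Cset : C.q0 ∉ C.Cset := by
  rw [mem_Cset]
  simp [q0]

/-- The drop predicate: messages into the group `Cset` are dropped from round
`k` on, except that in round `k` itself the messages in `S` go through. -/
def dropP (k : ℕ) (S : Set (Message n)) (m : Message n) : Prop :=
  m.receiver ∈ C.Cset ∧ (k + 1 ≤ m.round ∨ (m.round = k ∧ m ∉ S))

theorem dropP_round {k : ℕ} {S : Set (Message n)} {m : Message n}
    (h : C.dropP k S m) : k ≤ m.round := by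
  rcases h.2 with h | h <;> omega

theorem run_dropP_prefix (w : Fin n → Vi) (k : ℕ) (S : Set (Message n)) :
    ∀ j, j < k → run C.A w (C.dropP k S) j = run C.A w (fun _ => False) j :=
  run_prefix C.A w k (fun _ hm => C.dropP_round hm)

/-- The receive-omission attributed version: the whole group is faulty. -/
def roE (w : Fin n → Vi) (k : ℕ) (S : Set (Message n)) : Exec C.A :=
  bexec C.A w (C.dropP k S) (fun _ => False) ↑C.Cset

theorem roE_isExec (w : Fin n → Vi) (k : ℕ) (S : Set (Message n)) :
    IsExec C.t C.A ⊤ (C.roE w k S) := by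
  apply bexec_isExec
  · intro m h; exact h.elim
  · intro j m _ h; exact h.elim
  · intro j m _ hd _; exact hd.1
  · rw [Set.encard_coe_eq_coe_finsetCard, card_Cset]
    have h2 := C.ht
    exact_mod_cast Nat.cast_le.mpr (by omega : 4 * C.z ≤ C.t)

/-- The failure-free execution with a declared faulty set. -/
def ffE (w : Fin n → Vi) (flt : Set (Fin n)) : Exec C.A :=
  bexec C.A w (fun _ => False) (fun _ => False) flt

theorem ffE_isExec (w : Fin n → Vi) (flt : Set (Fin n))
    (hf : flt.encard ≤ (C.t : ℕ∞)) : IsExec C.t C.A ⊤ (C.ffE w flt) := by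
  apply bexec_isExec
  · intro m h; exact h.elim
  · intro j m _ h; exact h.elim
  · intro j m _ h; exact h.elim
  · exact hf

theorem roE_recvd_late (w : Fin n → Vi) (k : ℕ) (S : Set (Message n)) (c : Fin n)
    (hc : c ∈ C.Cset) {j : ℕ} (hj : k < j) : (C.roE w k S).recvd c j = ∅ := by
  ext m
  simp only [Set.mem_empty_iff_false, iff_false]
  rintro ⟨h1, h2, h3⟩
  have hr := ((run_inv C.A w (C.dropP k S) (j-1) m.sender).2.2.2.1 m h1).2
  exact h3 ⟨h2 ▸ hc, Or.inl (by omega)⟩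

theorem roE_recvd_at (w : Fin n → Vi) (k : ℕ) (S : Set (Message n)) (c : Fin n)
    (hc : c ∈ C.Cset) (hk : 1 ≤ k) :
    (C.roE w k S).recvd c k
      = {m : Message n | m ∈ (run C.A w (C.dropP k S) (k-1) m.sender).2 ∧
          m.receiver = c ∧ m ∈ S} := by
  ext m
  show (m ∈ _ ∧ m.receiver = c ∧ ¬ C.dropP k S m) ↔ _
  constructor
  · rintro ⟨h1, h2, h3⟩
    refine ⟨h1, h2, ?_⟩
    by_contra hmS
    have hr := ((run_inv C.A w (C.dropP k S) (k-1) m.sender).2.2.2.1 m h1).2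
    exact h3 ⟨h2 ▸ hc, Or.inr ⟨by omega, hmS⟩⟩
  · rintro ⟨h1, h2, h3⟩
    refine ⟨h1, h2, ?_⟩
    rintro ⟨-, h5 | h5⟩
    · have hr := ((run_inv C.A w (C.dropP k S) (k-1) m.sender).2.2.2.1 m h1).2
      omega
    · exact h5.2 h3

theorem roE_recvd_early (w : Fin n → Vi) (k : ℕ) (S : Set (Message n)) (c : Fin n)
    {j : ℕ} (hj : 1 ≤ j) (hjk : j < k) :
    (C.roE w k S).recvd c j
      = {m : Message n | m ∈ (run C.A w (C.dropP k S) (j-1) m.sender).2 ∧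
          m.receiver = c} := by
  ext m
  show (m ∈ _ ∧ m.receiver = c ∧ ¬ C.dropP k S m) ↔ _
  constructor
  · rintro ⟨h1, h2, -⟩; exact ⟨h1, h2⟩
  · rintro ⟨h1, h2⟩
    refine ⟨h1, h2, ?_⟩
    rintro ⟨-, h5 | h5⟩ <;>
    · have hr := ((run_inv C.A w (C.dropP k S) (j-1) m.sender).2.2.2.1 m h1).2
      omega

end Ctx
end LBproof
namespace LBproof
namespace Ctx

variable {n : ℕ} {Vi Vo : Type} (C : Ctx n Vi Vo)

/-- The dropped messages addressed to `c` coming from outside the group,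
in the `(w,k,S)`-dynamics. -/
def InC (w : Fin n → Vi) (k : ℕ) (S : Set (Message n)) (c : Fin n) : Set (Message n) :=
  {m : Message n | m.receiver = c ∧ m.sender ∉ C.Cset ∧ C.dropP k S m ∧
    m ∈ (run C.A w (C.dropP k S) (m.round - 1) m.sender).2}

/-- Their senders: the processes that must send-omit if `c` is to be correct. -/
def senderSet (w : Fin n → Vi) (k : ℕ) (S : Set (Message n)) (c : Fin n) : Set (Fin n) :=
  Message.sender '' (C.InC w k S c)

def IsGood (w : Fin n → Vi) (k : ℕ) (S : Set (Message n)) (c : Fin n) : Prop :=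
  (C.senderSet w k S c).encard ≤ ((2 * C.z - 1 : ℕ) : ℕ∞)

theorem InC_subset (w : Fin n → Vi) (k : ℕ) (S : Set (Message n)) (c : Fin n) :
    C.InC w k S c ⊆ {m : Message n | ∃ i, i ∉ (C.roE w k S).faulty ∧
      ∃ j, 1 ≤ j ∧ m ∈ (C.roE w k S).sent i j} := by
  rintro m ⟨hrec, hsend, hdrop, hmem⟩
  refine ⟨m.sender, ?_, m.round, ?_, ?_⟩
  · show m.sender ∉ (↑C.Cset : Set (Fin n))
    simpa using hsend
  · have := ((run_inv C.A w (C.dropP k S) (m.round - 1) m.sender).2.2.2.1 m hmem).2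
    omega
  · exact ⟨hmem, not_false⟩

theorem bad_small (w : Fin n → Vi) (k : ℕ) (S : Set (Message n)) :
    ∃ bad : Finset (Fin n), bad.card < C.z ∧
      ∀ c, c ∉ bad → C.IsGood w k S c := by
  classical
  have hms := C.hsmall _ (C.roE_isExec w k S)
  rw [msgCount] at hms
  have hfin : {m : Message n | ∃ i, i ∉ (C.roE w k S).faulty ∧
      ∃ j, 1 ≤ j ∧ m ∈ (C.roE w k S).sent i j}.Finite := by
    rw [← Set.encard_ne_top_iff]
    exact ne_top_of_lt hms
  set T := hfin.toFinset with hT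
  have hTcard : T.card ≤ 2 * C.z ^ 2 - 1 := by
    have h1 : ((T.card : ℕ) : ℕ∞) < ((2 * C.z ^ 2 : ℕ) : ℕ∞) := by
      rw [hT, ← Set.Finite.encard_eq_coe_toFinset_card hfin]
      exact hms
    have h2 : T.card < 2 * C.z ^ 2 := by exact_mod_cast h1
    omega
  set f : Fin n → ℕ := fun c => (T.filter (fun m : Message n => m.receiver = c)).card with hf
  have hsum : ∑ c ∈ C.Cset, f c ≤ T.card := by
    have hdis : ∀ x ∈ C.Cset, ∀ y ∈ C.Cset, x ≠ y →
        Disjoint (T.filter (fun m => m.receiver = x)) (T.filter (fun m => m.receiver = y)) := by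
      intro x _ y _ hxy
      rw [Finset.disjoint_left]
      intro m hmx hmy
      exact hxy ((Finset.mem_filter.mp hmx).2.symm.trans (Finset.mem_filter.mp hmy).2)
    calc ∑ c ∈ C.Cset, f c
        = (C.Cset.biUnion (fun c => T.filter (fun m => m.receiver = c))).card :=
          (Finset.card_biUnion hdis).symm
      _ ≤ T.card :=
          Finset.card_le_card (Finset.biUnion_subset.mpr fun c _ => Finset.filter_subset _ _)
  refine ⟨C.Cset.filter (fun c => 2 * C.z ≤ f c), ?_, ?_⟩
  · by_contra hcon
    push_neg at hcon
    set bad := C.Cset.filter (fun c => 2 * C.z ≤ f c) with hbad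
    have h1 : bad.card * (2 * C.z) ≤ ∑ c ∈ bad, f c := by
      have := Finset.card_nsmul_le_sum bad f (2 * C.z)
        (fun x hx => (Finset.mem_filter.mp hx).2)
      simpa [smul_eq_mul] using this
    have h2 : ∑ c ∈ bad, f c ≤ ∑ c ∈ C.Cset, f c :=
      Finset.sum_le_sum_of_subset (Finset.filter_subset _ _)
    have hchain : 2 * C.z ^ 2 ≤ T.card := by
      calc 2 * C.z ^ 2 = C.z * (2 * C.z) := by ring
        _ ≤ bad.card * (2 * C.z) := Nat.mul_le_mul_right _ hcon
        _ ≤ ∑ c ∈ bad, f c := h1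
        _ ≤ ∑ c ∈ C.Cset, f c := h2
        _ ≤ T.card := hsum
    have hpos : 0 < C.z ^ 2 := pow_pos (show 0 < C.z by have := C.hz; omega) 2
    omega
  · intro c hcbad
    have hfc : ∀ hc : c ∈ C.Cset, f c ≤ 2 * C.z - 1 := by
      intro hc
      by_contra hcon
      exact hcbad (Finset.mem_filter.mpr ⟨hc, by omega⟩)
    by_cases hc : c ∈ C.Cset
    · have hsubT : C.InC w k S c ⊆ ↑(T.filter (fun m => m.receiver = c)) := by
        intro m hm
        simp only [Finset.coe_filter, Set.mem_setOf_eq, hT, Set.Finite.mem_toFinset]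
        exact ⟨C.InC_subset w k S c hm, hm.1⟩
      calc (C.senderSet w k S c).encard
          ≤ (C.InC w k S c).encard := Set.encard_image_le _ _
        _ ≤ (↑(T.filter (fun m => m.receiver = c)) : Set (Message n)).encard :=
            Set.encard_mono hsubT
        _ = ((f c : ℕ) : ℕ∞) := by rw [Set.encard_coe_eq_coe_finsetCard]
        _ ≤ ((2 * C.z - 1 : ℕ) : ℕ∞) := Nat.cast_le.mpr (hfc hc)
    · have hempty : C.InC w k S c = ∅ := by
        ext m
        simp only [InC, Set.mem_setOf_eq, Set.mem_empty_iff_false, iff_false]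
        rintro ⟨h1, -, h3, -⟩
        exact hc (h1 ▸ h3.1)
      rw [IsGood, senderSet, hempty]
      simp

theorem exists_good_pair (w₁ : Fin n → Vi) (k₁ : ℕ) (S₁ : Set (Message n))
    (w₂ : Fin n → Vi) (k₂ : ℕ) (S₂ : Set (Message n)) (r : Fin n) :
    ∃ c ∈ C.Cset, c ≠ r ∧ C.IsGood w₁ k₁ S₁ c ∧ C.IsGood w₂ k₂ S₂ c := by
  obtain ⟨b₁, hb₁, hg₁⟩ := C.bad_small w₁ k₁ S₁
  obtain ⟨b₂, hb₂, hg₂⟩ := C.bad_small w₂ k₂ S₂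
  have hcard : (b₁ ∪ b₂ ∪ {r}).card < C.Cset.card := by
    have h1 : (b₁ ∪ b₂ ∪ {r}).card ≤ b₁.card + b₂.card + 1 := by
      calc (b₁ ∪ b₂ ∪ {r}).card ≤ (b₁ ∪ b₂).card + ({r} : Finset (Fin n)).card :=
            Finset.card_union_le _ _
        _ ≤ b₁.card + b₂.card + 1 := by
            have := Finset.card_union_le b₁ b₂
            simp only [Finset.card_singleton]
            omega
    rw [card_Cset]
    have h5 := C.hz
    omega
  have hne : (C.Cset \ (b₁ ∪ b₂ ∪ {r})).Nonempty := by
    rw [← Finset.card_pos]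
    have h2 := Finset.card_le_card_sdiff_add_card (s := C.Cset) (t := b₁ ∪ b₂ ∪ {r})
    omega
  obtain ⟨c, hc⟩ := hne
  rw [Finset.mem_sdiff] at hc
  simp only [Finset.mem_union, Finset.mem_singleton, not_or] at hc
  exact ⟨c, hc.1, hc.2.2, hg₁ c hc.2.1.1, hg₂ c hc.2.1.2⟩

end Ctx
end LBproof
namespace LBproof
namespace Ctx

variable {n : ℕ} {Vi Vo : Type} (C : Ctx n Vi Vo)

/-- Re-attribution of the omissions of `roE` that makes `c ∈ Cset` correct:
the dropped messages addressed to `c` are send-omitted by their senders. -/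
def swE (w : Fin n → Vi) (k : ℕ) (S : Set (Message n)) (c : Fin n) : Exec C.A :=
  bexec C.A w (C.dropP k S) (fun m => C.dropP k S m ∧ m.receiver = c)
    ((↑C.Cset ∪ C.senderSet w k S c) \ {c})

theorem swE_isExec (w : Fin n → Vi) (k : ℕ) (S : Set (Message n)) (c : Fin n)
    (hgood : C.IsGood w k S c) : IsExec C.t C.A ⊤ (C.swE w k S c) := by
  apply bexec_isExec
  · exact fun m h => h.1
  · rintro j m hm ⟨hd, hrc⟩
    refine ⟨?_, ?_⟩
    · by_cases hs : m.sender ∈ C.Cset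
      · exact Or.inl hs
      · refine Or.inr ⟨m, ⟨hrc, hs, hd, ?_⟩, rfl⟩
        have hr := ((run_inv C.A w (C.dropP k S) j m.sender).2.2.2.1 m hm).2
        rw [show m.round - 1 = j from by omega]
        exact hm
    · simp only [Set.mem_singleton_iff]
      intro he
      exact m.ne (he.trans hrc.symm)
  · intro j m hm hd hns
    refine ⟨Or.inl hd.1, ?_⟩
    simp only [Set.mem_singleton_iff]
    intro he
    exact hns ⟨hd, he⟩
  · calc ((↑C.Cset ∪ C.senderSet w k S c) \ {c}).encard
        ≤ (↑C.Cset ∪ C.senderSet w k S c).encard := Set.encard_mono Set.diff_subset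
      _ ≤ (↑C.Cset : Set (Fin n)).encard + (C.senderSet w k S c).encard :=
          Set.encard_union_le _ _
      _ ≤ ((4 * C.z : ℕ) : ℕ∞) + ((2 * C.z - 1 : ℕ) : ℕ∞) := by
          refine add_le_add ?_ hgood
          rw [Set.encard_coe_eq_coe_finsetCard, card_Cset]
      _ = ((4 * C.z + (2 * C.z - 1) : ℕ) : ℕ∞) := by rw [Nat.cast_add]
      _ ≤ (C.t : ℕ∞) := by
          refine Nat.cast_le.mpr ?_
          have h1 := C.ht; have h2 := C.hz
          omega

theorem c_not_fault (w : Fin n → Vi) (k : ℕ) (S : Set (Message n)) (c : Fin n) :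
    c ∉ (C.swE w k S c).faulty := by
  intro h
  exact h.2 rfl

theorem q0_not_fault_ro (w : Fin n → Vi) (k : ℕ) (S : Set (Message n)) :
    C.q0 ∉ (C.roE w k S).faulty := by
  show C.q0 ∉ (↑C.Cset : Set (Fin n))
  simpa using C.q0_not_Cset

theorem exists_avoid {X : Set (Fin n)} (hX : X.encard < (n : ℕ∞)) : ∃ q, q ∉ X := by
  by_contra h
  push_neg at h
  have hu : X = Set.univ := Set.eq_univ_iff_forall.mpr h
  rw [hu, Set.encard_univ] at hX
  simp only [ENat.card_eq_coe_fintype_card, Fintype.card_fin] at hX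
  exact lt_irrefl _ hX

/-- The key lemma: if `c` is a good group member with the same proposal and
the same received messages in the two deaf-group executions, then the
observer's decisions in the two executions coincide. -/
theorem key (w₁ w₂ : Fin n → Vi) (k₁ k₂ : ℕ) (S₁ S₂ : Set (Message n)) (c : Fin n)
    (hg₁ : C.IsGood w₁ k₁ S₁ c) (hg₂ : C.IsGood w₂ k₂ S₂ c)
    (hpc : w₁ c = w₂ c)
    (hrc : ∀ j, 1 ≤ j → (C.roE w₁ k₁ S₁).recvd c j = (C.roE w₂ k₂ S₂).recvd c j)
    {v₁ v₂ : Vo}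
    (h₁ : Decides ⊤ (C.roE w₁ k₁ S₁) C.q0 v₁)
    (h₂ : Decides ⊤ (C.roE w₂ k₂ S₂) C.q0 v₂) :
    v₁ = v₂ := by
  have hro₁ := C.roE_isExec w₁ k₁ S₁
  have hro₂ := C.roE_isExec w₂ k₂ S₂
  have hsw₁ := C.swE_isExec w₁ k₁ S₁ c hg₁
  have hsw₂ := C.swE_isExec w₂ k₂ S₂ c hg₂
  obtain ⟨q, hq⟩ : ∃ q : Fin n,
      q ∉ ((↑C.Cset ∪ C.senderSet w₁ k₁ S₁ c) ∪ C.senderSet w₂ k₂ S₂ c) := by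
    apply exists_avoid
    have e1 : ((↑C.Cset ∪ C.senderSet w₁ k₁ S₁ c) ∪ C.senderSet w₂ k₂ S₂ c).encard
        ≤ ((↑C.Cset : Set (Fin n)).encard + (C.senderSet w₁ k₁ S₁ c).encard)
          + (C.senderSet w₂ k₂ S₂ c).encard :=
      le_trans (Set.encard_union_le _ _) (add_le_add (Set.encard_union_le _ _) le_rfl)
    have e2 : (↑C.Cset : Set (Fin n)).encard = ((4 * C.z : ℕ) : ℕ∞) := by
      rw [Set.encard_coe_eq_coe_finsetCard, card_Cset]
    calc ((↑C.Cset ∪ C.senderSet w₁ k₁ S₁ c) ∪ C.senderSet w₂ k₂ S₂ c).encard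
        ≤ ((4 * C.z : ℕ) : ℕ∞) + ((2 * C.z - 1 : ℕ) : ℕ∞) + ((2 * C.z - 1 : ℕ) : ℕ∞) := by
          rw [← e2]
          exact le_trans e1 (add_le_add (add_le_add le_rfl hg₁) hg₂)
      _ = ((4 * C.z + (2 * C.z - 1) + (2 * C.z - 1) : ℕ) : ℕ∞) := by
          rw [Nat.cast_add, Nat.cast_add]
      _ < (n : ℕ∞) := by
          refine Nat.cast_lt.mpr ?_
          have h1 := C.ht; have h2 := C.hz; have h3 := C.htn
          omega
  have hqC : q ∉ (↑C.Cset : Set (Fin n)) := fun h => hq (Or.inl (Or.inl h))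
  have hq1 : q ∉ (C.swE w₁ k₁ S₁ c).faulty := by
    intro h
    rcases h.1 with h' | h'
    · exact hq (Or.inl (Or.inl h'))
    · exact hq (Or.inl (Or.inr h'))
  have hq2 : q ∉ (C.swE w₂ k₂ S₂ c).faulty := by
    intro h
    rcases h.1 with h' | h'
    · exact hq (Or.inl (Or.inl h'))
    · exact hq (Or.inr h')
  obtain ⟨u₁, hu₁⟩ := (C.hA _ hro₁).1 q hqC
  obtain ⟨u₂, hu₂⟩ := (C.hA _ hro₂).1 q hqC
  have hv₁ : v₁ = u₁ :=
    (C.hA _ hro₁).2.1 C.q0 q v₁ u₁ (C.q0_not_fault_ro w₁ k₁ S₁) hqC h₁ hu₁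
  have hv₂ : v₂ = u₂ :=
    (C.hA _ hro₂).2.1 C.q0 q v₂ u₂ (C.q0_not_fault_ro w₂ k₂ S₂) hqC h₂ hu₂
  have hu₁s : Decides ⊤ (C.swE w₁ k₁ S₁ c) q u₁ :=
    decides_of_states (fun _ _ => rfl) hu₁
  have hu₂s : Decides ⊤ (C.swE w₂ k₂ S₂ c) q u₂ :=
    decides_of_states (fun _ _ => rfl) hu₂
  obtain ⟨γ, hγ⟩ := (C.hA _ hsw₁).1 c (C.c_not_fault w₁ k₁ S₁ c)
  have hγu₁ : γ = u₁ :=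
    (C.hA _ hsw₁).2.1 c q γ u₁ (C.c_not_fault w₁ k₁ S₁ c) hq1 hγ hu₁s
  have hprop : C.A.prop ((C.swE w₁ k₁ S₁ c).st c 1) = C.A.prop ((C.swE w₂ k₂ S₂ c).st c 1) := by
    show C.A.prop (C.A.init c (w₁ c)) = C.A.prop (C.A.init c (w₂ c))
    rw [C.A.init_prop, C.A.init_prop, hpc]
  have hrecvd : ∀ j, 1 ≤ j → (C.swE w₁ k₁ S₁ c).recvd c j = (C.swE w₂ k₂ S₂ c).recvd c j :=
    fun j hj => hrc j hj
  have hst := states_eq hsw₁ hsw₂ c hprop hrecvd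
  have hγ₂ : Decides ⊤ (C.swE w₂ k₂ S₂ c) c γ := decides_of_states hst hγ
  have hγu₂ : γ = u₂ :=
    (C.hA _ hsw₂).2.1 c q γ u₂ (C.c_not_fault w₂ k₂ S₂ c) hq2 hγ₂ hu₂s
  rw [hv₁, hv₂, ← hγu₁, ← hγu₂]

end Ctx
end LBproof
namespace LBproof
namespace Ctx

variable {n : ℕ} {Vi Vo : Type} (C : Ctx n Vi Vo)

/-- The observer's decisions agree across the two executions. -/
def DEq (E₁ E₂ : Exec C.A) : Prop :=
  ∀ v₁ v₂, Decides ⊤ E₁ C.q0 v₁ → Decides ⊤ E₂ C.q0 v₂ → v₁ = v₂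

theorem DEq_refl {E : Exec C.A} (hE : IsExec C.t C.A ⊤ E) (hq : C.q0 ∉ E.faulty) :
    C.DEq E E :=
  fun v₁ v₂ h₁ h₂ => (C.hA E hE).2.1 C.q0 C.q0 v₁ v₂ hq hq h₁ h₂

theorem DEq_trans {E₁ E₂ E₃ : Exec C.A} (h12 : C.DEq E₁ E₂) (h23 : C.DEq E₂ E₃)
    (hex : ∃ u, Decides ⊤ E₂ C.q0 u) : C.DEq E₁ E₃ := by
  obtain ⟨u, hu⟩ := hex
  exact fun v₁ v₃ h₁ h₃ => (h12 v₁ u h₁ hu).trans (h23 u v₃ hu h₃)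

theorem ro_term (w : Fin n → Vi) (k : ℕ) (S : Set (Message n)) :
    ∃ u, Decides ⊤ (C.roE w k S) C.q0 u :=
  (C.hA _ (C.roE_isExec w k S)).1 C.q0 (C.q0_not_fault_ro w k S)

/-- Delivering one extra round-`k` message into the group does not change the
observer's decision. -/
theorem pivot (w : Fin n → Vi) (k : ℕ) (hk : 1 ≤ k) (S : Set (Message n)) (μ : Message n)
    (hμr : μ.receiver ∈ C.Cset) (hμS : μ ∉ S) :
    C.DEq (C.roE w k S) (C.roE w k (insert μ S)) := by
  obtain ⟨c, hcC, hcr, hg₁, hg₂⟩ := C.exists_good_pair w k S w k (insert μ S) μ.receiver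
  intro v₁ v₂ h₁ h₂
  refine C.key w w k k S (insert μ S) c hg₁ hg₂ rfl ?_ h₁ h₂
  intro j hj
  rcases lt_trichotomy j k with hjk | hjk | hjk
  · rw [C.roE_recvd_early w k S c hj hjk, C.roE_recvd_early w k (insert μ S) c hj hjk]
    rw [C.run_dropP_prefix w k S (j-1) (by omega),
      C.run_dropP_prefix w k (insert μ S) (j-1) (by omega)]
  · subst hjk
    rw [C.roE_recvd_at w j S c hcC hj, C.roE_recvd_at w j (insert μ S) c hcC hj]
    rw [C.run_dropP_prefix w j S (j-1) (by omega),
      C.run_dropP_prefix w j (insert μ S) (j-1) (by omega)]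
    ext m
    simp only [Set.mem_setOf_eq, Set.mem_insert_iff]
    constructor
    · rintro ⟨a, b, hc'⟩
      exact ⟨a, b, Or.inr hc'⟩
    · rintro ⟨a, b, hc' | hc'⟩
      · exact absurd (hc' ▸ b).symm hcr
      · exact ⟨a, b, hc'⟩
  · rw [C.roE_recvd_late w k S c hcC hjk, C.roE_recvd_late w k (insert μ S) c hcC hjk]

/-- Messages into the group at round `k` in the failure-free prefix. -/
def Mset (w : Fin n → Vi) (k : ℕ) : Set (Message n) :=
  {m : Message n | m.receiver ∈ C.Cset ∧ m.round = k ∧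
    m ∈ (run C.A w (fun _ => False) (k-1) m.sender).2}

theorem Mset_finite (w : Fin n → Vi) (k : ℕ) (hk : 1 ≤ k) : (C.Mset w k).Finite := by
  have hms := C.hsmall _ (C.ffE_isExec w ∅ (by simp))
  rw [msgCount] at hms
  have hfin : {m : Message n | ∃ i, i ∉ (C.ffE w ∅).faulty ∧
      ∃ j, 1 ≤ j ∧ m ∈ (C.ffE w ∅).sent i j}.Finite := by
    rw [← Set.encard_ne_top_iff]
    exact ne_top_of_lt hms
  apply hfin.subset
  rintro m ⟨h1, h2, h3⟩
  refine ⟨m.sender, fun h => h, m.round, by omega, ?_⟩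
  show m ∈ (run C.A w (fun _ => False) (m.round - 1) m.sender).2 ∧ _
  rw [h2]
  exact ⟨h3, not_false⟩

theorem ro_chain_S_aux (w : Fin n → Vi) (k : ℕ) (hk : 1 ≤ k) :
    ∀ (N : ℕ) (S : Set (Message n)), S.Finite → S.ncard ≤ N →
      (∀ m ∈ S, m.receiver ∈ C.Cset) →
      C.DEq (C.roE w k ∅) (C.roE w k S) := by
  intro N
  induction N with
  | zero =>
      intro S hSfin hcard _
      have hS0 : S = ∅ := (Set.ncard_eq_zero hSfin).mp (by omega)
      rw [hS0]
      exact C.DEq_refl (C.roE_isExec w k ∅) (C.q0_not_fault_ro w k ∅)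
  | succ N ih =>
      intro S hSfin hcard hrec
      rcases Set.eq_empty_or_nonempty S with rfl | ⟨μ, hμ⟩
      · exact C.DEq_refl (C.roE_isExec w k ∅) (C.q0_not_fault_ro w k ∅)
      · have hpos : 0 < S.ncard := (Set.ncard_pos hSfin).mpr ⟨μ, hμ⟩
        have hdcard : (S \ {μ}).ncard = S.ncard - 1 :=
          Set.ncard_diff_singleton_of_mem hμ
        have h1 := ih (S \ {μ}) (hSfin.diff) (by omega)
          (fun m hm => hrec m hm.1)
        have h2 := C.pivot w k hk (S \ {μ}) μ (hrec μ hμ) (by simp)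
        have hins : insert μ (S \ {μ}) = S := by
          rw [Set.insert_diff_singleton]
          exact Set.insert_eq_self.mpr hμ
        rw [hins] at h2
        exact C.DEq_trans h1 h2 (C.ro_term w k (S \ {μ}))

theorem ro_chain_S (w : Fin n → Vi) (k : ℕ) (hk : 1 ≤ k) (S : Set (Message n))
    (hSfin : S.Finite) (hrec : ∀ m ∈ S, m.receiver ∈ C.Cset) :
    C.DEq (C.roE w k ∅) (C.roE w k S) :=
  C.ro_chain_S_aux w k hk S.ncard S hSfin le_rfl hrec

theorem ro_step (w : Fin n → Vi) (k : ℕ) (hk : 1 ≤ k) :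
    ∀ j, run C.A w (C.dropP k (C.Mset w k)) j = run C.A w (C.dropP (k+1) ∅) j := by
  apply run_congr
  intro j m hm
  have hr := ((run_inv C.A w (C.dropP k (C.Mset w k)) j m.sender).2.2.2.1 m hm).2
  constructor
  · rintro ⟨h1, h2 | h2⟩
    · refine ⟨h1, ?_⟩
      rcases Nat.eq_or_lt_of_le h2 with he | hl
      · exact Or.inr ⟨he.symm, Set.notMem_empty m⟩
      · exact Or.inl (by omega)
    · exfalso
      apply h2.2
      refine ⟨h1, h2.1, ?_⟩
      have hj : j = k - 1 := by omega
      subst hj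
      rw [← C.run_dropP_prefix w k (C.Mset w k) (k-1) (by omega)]
      exact hm
  · rintro ⟨h1, h2 | h2⟩
    · exact ⟨h1, Or.inl (by omega)⟩
    · exact ⟨h1, Or.inl (by omega)⟩

theorem ro_MtoNext (w : Fin n → Vi) (k : ℕ) (hk : 1 ≤ k) :
    C.DEq (C.roE w k (C.Mset w k)) (C.roE w (k+1) ∅) := by
  intro v₁ v₂ h₁ h₂
  have hst : ∀ j, 1 ≤ j →
      (C.roE w k (C.Mset w k)).st C.q0 j = (C.roE w (k+1) ∅).st C.q0 j := by
    intro j _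
    show (run C.A w (C.dropP k (C.Mset w k)) (j-1) C.q0).1
        = (run C.A w (C.dropP (k+1) ∅) (j-1) C.q0).1
    rw [C.ro_step w k hk (j-1)]
  have h₁' : Decides ⊤ (C.roE w (k+1) ∅) C.q0 v₁ := decides_of_states hst h₁
  exact (C.hA _ (C.roE_isExec w (k+1) ∅)).2.1 C.q0 C.q0 v₁ v₂
    (C.q0_not_fault_ro w (k+1) ∅) (C.q0_not_fault_ro w (k+1) ∅) h₁' h₂

theorem ro_chain_k (w : Fin n → Vi) : ∀ K : ℕ, C.DEq (C.roE w 1 ∅) (C.roE w (K+1) ∅) := by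
  intro K
  induction K with
  | zero => exact C.DEq_refl (C.roE_isExec w 1 ∅) (C.q0_not_fault_ro w 1 ∅)
  | succ K ih =>
      have hk : 1 ≤ K + 1 := by omega
      have h1 : C.DEq (C.roE w (K+1) ∅) (C.roE w (K+1) (C.Mset w (K+1))) :=
        C.ro_chain_S w (K+1) hk (C.Mset w (K+1)) (C.Mset_finite w (K+1) hk)
          (fun m hm => hm.1)
      have h2 : C.DEq (C.roE w (K+1) (C.Mset w (K+1))) (C.roE w (K+2) ∅) :=
        C.ro_MtoNext w (K+1) hk
      exact C.DEq_trans (C.DEq_trans ih h1 (C.ro_term w (K+1) ∅)) h2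
        (C.ro_term w (K+1) (C.Mset w (K+1)))

theorem ff_ro1 (w : Fin n → Vi) {v u : Vo}
    (hv : Decides ⊤ (C.ffE w ∅) C.q0 v) (hu : Decides ⊤ (C.roE w 1 ∅) C.q0 u) :
    u = v := by
  obtain ⟨r, hr, hdec⟩ := hv
  have hv' : Decides ⊤ (C.roE w (r+1) ∅) C.q0 v := by
    refine ⟨r, hr, ?_⟩
    show C.A.dec ((run C.A w (C.dropP (r+1) ∅) (r-1) C.q0).1) = some v
    rw [C.run_dropP_prefix w (r+1) ∅ (r-1) (by omega)]
    exact hdec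
  exact C.ro_chain_k w r u v hu hv'

theorem ro1_recvd_empty (w : Fin n → Vi) {c : Fin n} (hc : c ∈ C.Cset) :
    ∀ j, 1 ≤ j → (C.roE w 1 ∅).recvd c j = ∅ := by
  intro j hj
  rcases eq_or_lt_of_le hj with he | hl
  · rw [← he]
    rw [C.roE_recvd_at w 1 ∅ c hc le_rfl]
    ext m
    simp
  · exact C.roE_recvd_late w 1 ∅ c hc hl

/-- Changing the input of a single process does not change the observer's
decision in the fully deaf-group execution. -/
theorem const_in (w w' : Fin n → Vi) (r : Fin n) (hw : ∀ i, i ≠ r → w i = w' i) :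
    C.DEq (C.roE w 1 ∅) (C.roE w' 1 ∅) := by
  obtain ⟨c, hcC, hcr, hg₁, hg₂⟩ := C.exists_good_pair w 1 ∅ w' 1 ∅ r
  intro v₁ v₂ h₁ h₂
  refine C.key w w' 1 1 ∅ ∅ c hg₁ hg₂ (hw c hcr) ?_ h₁ h₂
  intro j hj
  rw [C.ro1_recvd_empty w hcC j hj, C.ro1_recvd_empty w' hcC j hj]

theorem const_all (w w' : Fin n → Vi) : C.DEq (C.roE w 1 ∅) (C.roE w' 1 ∅) := by
  classical
  have main : ∀ (T : Finset (Fin n)) (w w' : Fin n → Vi), (∀ i, i ∉ T → w i = w' i) →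
      C.DEq (C.roE w 1 ∅) (C.roE w' 1 ∅) := by
    intro T
    induction T using Finset.induction_on with
    | empty =>
        intro w w' h
        have he : w = w' := funext (fun i => h i (Finset.notMem_empty i))
        rw [he]
        exact C.DEq_refl (C.roE_isExec w' 1 ∅) (C.q0_not_fault_ro w' 1 ∅)
    | @insert a T ha ih =>
        intro w w' h
        set mid := Function.update w' a (w a) with hmid
        have h1 : ∀ i, i ∉ T → w i = mid i := by
          intro i hi
          by_cases hia : i = a
          · subst hia
            rw [hmid, Function.update_self]
          · rw [hmid, Function.update_of_ne hia]
            exact h i (by simp [hia, hi])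
        have h2 : ∀ i, i ≠ a → mid i = w' i :=
          fun i hia => by rw [hmid, Function.update_of_ne hia]
        exact C.DEq_trans (ih w mid h1) (C.const_in mid w' a h2) (C.ro_term mid 1 ∅)
  exact main Finset.univ w w' (fun i hi => absurd (Finset.mem_univ i) hi)

theorem main_contra [Nonempty Vi]
    (hnontriv : (⋂ c ∈ {c : Fin n → Option Vi | IsInputConf n C.t c}, C.val c) = ∅) :
    False := by
  classical
  set w₀ : Fin n → Vi := fun _ => Classical.arbitrary Vi with hw₀
  have hff₀ : IsExec C.t C.A ⊤ (C.ffE w₀ ∅) := C.ffE_isExec w₀ ∅ (by simp)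
  obtain ⟨v₀, hv₀⟩ := (C.hA _ hff₀).1 C.q0 (fun h => h)
  have hmem : ∀ c₀ : Fin n → Option Vi, IsInputConf n C.t c₀ → v₀ ∈ C.val c₀ := by
    intro c₀ hc₀
    set w : Fin n → Vi := fun i => (c₀ i).getD (Classical.arbitrary Vi) with hw
    set flt : Set (Fin n) := {i | c₀ i = none} with hflt
    have hcompl : {i | c₀ i ≠ none} = fltᶜ := by
      ext i
      simp [hflt]
    have hsumn : flt.ncard + fltᶜ.ncard = n := by
      have := Set.ncard_add_ncard_compl flt
      simpa using this
    have h2 : n - C.t ≤ fltᶜ.ncard := by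
      rw [← hcompl]
      exact hc₀
    have hcard : flt.encard ≤ (C.t : ℕ∞) := by
      have h3 : flt.ncard ≤ C.t := by have := C.htn; omega
      calc flt.encard = ((flt.ncard : ℕ) : ℕ∞) :=
            (Set.Finite.cast_ncard_eq (Set.toFinite flt)).symm
        _ ≤ (C.t : ℕ∞) := Nat.cast_le.mpr h3
    have hE' : IsExec C.t C.A ⊤ (C.ffE w flt) := C.ffE_isExec w flt hcard
    have hcorr : CorrespondsTo (C.ffE w flt) c₀ := by
      intro i
      constructor
      · intro hi
        have hnn : c₀ i ≠ none := hi
        obtain ⟨x, hx⟩ := Option.ne_none_iff_exists'.mp hnn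
        have hpropi : C.A.prop ((C.ffE w flt).st i 1) = w i := by
          show C.A.prop ((run C.A w (fun _ => False) 0 i).1) = w i
          exact (run_inv C.A w _ 0 i).2.2.1
        rw [hpropi, hx, hw]
        simp [hx]
      · intro hi
        exact hi
    have hne : fltᶜ.Nonempty := by
      apply Set.nonempty_of_ncard_ne_zero
      have := C.htn
      omega
    obtain ⟨q1, hq1⟩ := hne
    have hq1' : q1 ∉ flt := hq1
    obtain ⟨u, hu⟩ := (C.hA _ hE').1 q1 hq1'
    have hu0 : Decides ⊤ (C.ffE w ∅) q1 u := decides_of_states (fun _ _ => rfl) hu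
    have hff : IsExec C.t C.A ⊤ (C.ffE w ∅) := C.ffE_isExec w ∅ (by simp)
    obtain ⟨vw, hvw⟩ := (C.hA _ hff).1 C.q0 (fun h => h)
    have huvw : u = vw := (C.hA _ hff).2.1 q1 C.q0 u vw (fun h => h) (fun h => h) hu0 hvw
    obtain ⟨uw, huw⟩ := C.ro_term w 1 ∅
    obtain ⟨u0, hu0'⟩ := C.ro_term w₀ 1 ∅
    have e1 : uw = vw := C.ff_ro1 w hvw huw
    have e2 : u0 = v₀ := C.ff_ro1 w₀ hv₀ hu0'
    have e3 : uw = u0 := C.const_all w w₀ uw u0 huw hu0'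
    have huv₀ : u = v₀ := by rw [huvw, ← e1, e3, e2]
    have hval := (C.hA _ hE').2.2 c₀ hcorr q1 hq1' u hu
    rwa [huv₀] at hval
  have hv₀mem : v₀ ∈ (⋂ c ∈ {c : Fin n → Option Vi | IsInputConf n C.t c}, C.val c) := by
    simp only [Set.mem_iInter]
    exact fun c₀ hc₀ => hmem c₀ hc₀
  rw [hnontriv] at hv₀mem
  exact hv₀mem

end Ctx
end LBproof
/-- Every deterministic algorithm solving a non-trivial
`val`-agreement problem in the omission model (with `8 ≤ t < n`, `8 ∣ t`)
has message complexity at least `t² / 32`. -/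
theorem nontrivial_agreement_message_lower_bound
    (n t : ℕ) (ht8 : 8 ≤ t) (htn : t < n) (hdvd : 8 ∣ t)
    (Vi Vo : Type) [Nonempty Vi]
    (val : (Fin n → Option Vi) → Set Vo)
    -- `val` is a validity property
    (hval : ∀ c : Fin n → Option Vi, IsInputConf n t c → (val c).Nonempty)
    -- the `val`-agreement problem is non-trivial
    (hnontriv : (⋂ c ∈ {c : Fin n → Option Vi | IsInputConf n t c}, val c) = ∅)
    (A : Algorithm n Vi Vo) (hA : SolvesVal t A val) :
    ((t ^ 2 / 32 : ℕ) : ℕ∞) ≤ MsgComplexity t A := by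
  by_contra hcon
  push_neg at hcon
  obtain ⟨s, hs⟩ := hdvd
  have hs1 : 1 ≤ s := by omega
  have hpow : t ^ 2 / 32 = 2 * s ^ 2 := by
    rw [hs]
    have h64 : (8 * s) ^ 2 = 32 * (2 * s ^ 2) := by ring
    rw [h64, Nat.mul_div_cancel_left _ (by norm_num : 0 < 32)]
  set C : LBproof.Ctx n Vi Vo :=
    { A := A, t := t, z := s, val := val,
      ht := hs, hz := hs1, htn := htn, hA := hA,
      hsmall := by
        intro E hE
        have h1 : msgCount E ≤ MsgComplexity t A :=
          le_iSup (fun E : {E : Exec A // IsExec t A ⊤ E} => msgCount E.1) ⟨E, hE⟩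
        calc msgCount E ≤ MsgComplexity t A := h1
          _ < ((t ^ 2 / 32 : ℕ) : ℕ∞) := hcon
          _ = ((2 * s ^ 2 : ℕ) : ℕ∞) := by rw [hpow] } with hC
  exact C.main_contra hnontriv
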